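/- Let k be a field, V a k-vector space, and W₁,…,W_N subspaces of V. Then (W₁ ∩ ⋯ ∩ Wₙ) + W_{n+1} = V for every 1 ≤ n < N if and only if there exist a basis E of V and pairwise disjoint subsets E₁,…,E_N ⊆ E such that W_j = span(E \ E_j) for every 1 ≤ j ≤ N. -/

import Mathlib

open Submodule

section Aux

variable {k V : Type*} [Field k] [AddCommGroup V] [Module k V] {N : ℕ}

/-- Prefix intersection `⋂_{j < t} W_j`. -/
private def Ilt (Ws : Fin N → Submodule k V) (t : ℕ) : Submodule k V :=
  ⨅ (j : Fin N) (_ : (j : ℕ) < t), Ws j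

private lemma Ilt_zero (Ws : Fin N → Submodule k V) : Ilt Ws 0 = ⊤ := by
  simp [Ilt]

private lemma Ilt_anti (Ws : Fin N → Submodule k V) {s t : ℕ} (h : s ≤ t) :
    Ilt Ws t ≤ Ilt Ws s := by
  refine le_iInf fun j => le_iInf fun hj => ?_
  exact iInf_le_of_le j (iInf_le _ (lt_of_lt_of_le hj h))

private lemma Ilt_le (Ws : Fin N → Submodule k V) {t : ℕ} {j : Fin N} (hj : (j : ℕ) < t) :
    Ilt Ws t ≤ Ws j := iInf_le_of_le j (iInf_le _ hj)

private lemma Ilt_succ (Ws : Fin N → Submodule k V) {t : ℕ} (ht : t < N) :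
    Ilt Ws (t + 1) = Ilt Ws t ⊓ Ws ⟨t, ht⟩ := by
  apply le_antisymm
  · exact le_inf (Ilt_anti Ws (Nat.le_succ t)) (Ilt_le Ws (Nat.lt_succ_self t))
  · refine le_iInf fun j => le_iInf fun hj => ?_
    rcases Nat.lt_succ_iff_lt_or_eq.mp hj with hj' | hj'
    · exact inf_le_left.trans (Ilt_le Ws hj')
    · have : j = ⟨t, ht⟩ := Fin.ext hj'
      rw [this]; exact inf_le_right

private lemma Ilt_of_ge (Ws : Fin N → Submodule k V) {t : ℕ} (ht : N ≤ t) :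
    Ilt Ws t = ⨅ j, Ws j := by
  apply le_antisymm
  · exact le_iInf fun j => Ilt_le Ws (lt_of_lt_of_le j.isLt ht)
  · refine le_iInf fun j => le_iInf fun hj => iInf_le _ j

/-- Key lemma: mutual transversality of prefixes implies transversality of
each `W_m` with the intersection of all the others. -/
private lemma key_lemma (Ws : Fin N → Submodule k V)
    (h : ∀ m : Fin N, Ilt Ws m.val ⊔ Ws m = ⊤) (m : Fin N) :
    (⨅ (j : Fin N) (_ : j ≠ m), Ws j) ⊔ Ws m = ⊤ := by
  set P : ℕ → Submodule k V := fun t => ⨅ (j : Fin N) (_ : (j : ℕ) < t ∧ j ≠ m), Ws j with hP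
  have hPle : ∀ t (j : Fin N), (j : ℕ) < t ∧ j ≠ m → P t ≤ Ws j := fun t j hj =>
    iInf_le_of_le j (iInf_le _ hj)
  have hlePt : ∀ t (q : Submodule k V), (∀ j : Fin N, (j : ℕ) < t ∧ j ≠ m → q ≤ Ws j) → q ≤ P t :=
    fun t q hq => le_iInf fun j => le_iInf fun hj => hq j hj
  have hIltP : ∀ t, Ilt Ws t ≤ P t := fun t => hlePt t _ fun j hj => Ilt_le Ws hj.1
  have main : ∀ t, P t ⊔ Ws m = ⊤ := by
    intro t
    induction t with
    | zero =>
      have : P 0 = ⊤ := by simp [hP]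
      rw [this, top_sup_eq]
    | succ s ih =>
      by_cases hsN : s < N
      · set ws : Fin N := ⟨s, hsN⟩ with hws
        by_cases hsm : ws = m
        · -- the new index is `m`, excluded, so `P (s+1) = P s`
          have hPe : P (s + 1) = P s := by
            apply le_antisymm
            · exact hlePt s _ fun j hj => hPle (s + 1) j ⟨Nat.lt_succ_of_lt hj.1, hj.2⟩
            · refine hlePt (s + 1) _ fun j hj => ?_
              rcases Nat.lt_succ_iff_lt_or_eq.mp hj.1 with hj' | hj'
              · exact hPle s j ⟨hj', hj.2⟩
              · exact absurd (hsm ▸ Fin.ext hj' : j = m) hj.2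
          rw [hPe]; exact ih
        · by_cases hms : (m : ℕ) < s
          · -- element argument
            have hPs1 : P (s + 1) = P s ⊓ Ws ws := by
              apply le_antisymm
              · exact le_inf
                  (hlePt s _ fun j hj => hPle (s + 1) j ⟨Nat.lt_succ_of_lt hj.1, hj.2⟩)
                  (hPle (s + 1) ws ⟨Nat.lt_succ_self s, hsm⟩)
              · refine hlePt (s + 1) _ fun j hj => ?_
                rcases Nat.lt_succ_iff_lt_or_eq.mp hj.1 with hj' | hj'
                · exact inf_le_left.trans (hPle s j ⟨hj', hj.2⟩)
                · have : j = ws := Fin.ext hj'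
                  rw [this]; exact inf_le_right
            have hIs : Ilt Ws s ≤ Ws m := Ilt_le Ws hms
            have hws' : Ilt Ws s ⊔ Ws ws = ⊤ := h ws
            rw [eq_top_iff]
            intro v _
            have hv : v ∈ Ilt Ws s ⊔ Ws ws := by rw [hws']; trivial
            obtain ⟨a, ha, w, hw, rfl⟩ := Submodule.mem_sup.mp hv
            have hw2 : w ∈ P s ⊔ Ws m := by rw [ih]; trivial
            obtain ⟨p, hp, u, hu, rfl⟩ := Submodule.mem_sup.mp hw2
            have hp2 : p ∈ Ilt Ws s ⊔ Ws ws := by rw [hws']; trivial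
            obtain ⟨a', ha', w', hw', rfl⟩ := Submodule.mem_sup.mp hp2
            have hw'P : w' ∈ P (s + 1) := by
              rw [hPs1]
              refine ⟨?_, hw'⟩
              have he : w' = (a' + w') - a' := by abel
              rw [he]
              exact sub_mem hp (hIltP s ha')
            refine Submodule.mem_sup.mpr ⟨w', hw'P, a + a' + u, ?_, by abel⟩
            exact add_mem (add_mem (hIs ha) (hIs ha')) hu
          · -- `s ≤ m`, so `P (s+1) ⊇ Ilt Ws m.val`
            have hsm' : s + 1 ≤ (m : ℕ) := by
              rcases Nat.lt_or_ge (m : ℕ) (s + 1) with hlt | hge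
              · exfalso
                have hms' : (m : ℕ) = s := le_antisymm (Nat.lt_succ_iff.mp hlt) (le_of_not_gt hms)
                exact hsm (Fin.ext (by simp [hws, hms'])).symm
              · exact hge
            have hle : Ilt Ws (m : ℕ) ≤ P (s + 1) :=
              hlePt (s + 1) _ fun j hj => Ilt_le Ws (lt_of_lt_of_le hj.1 hsm')
            rw [eq_top_iff, ← h m]
            exact sup_le_sup hle le_rfl
      · -- `s ≥ N`: `P (s+1) = P s`
        have hPe : P (s + 1) = P s := by
          apply le_antisymm
          · exact hlePt s _ fun j hj => hPle (s + 1) j ⟨Nat.lt_succ_of_lt hj.1, hj.2⟩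
          · exact hlePt (s + 1) _ fun j hj =>
              hPle s j ⟨lt_of_lt_of_le j.isLt (le_of_not_gt hsN), hj.2⟩
        rw [hPe]; exact ih
  have hPN : P N = ⨅ (j : Fin N) (_ : j ≠ m), Ws j := by
    apply le_antisymm
    · exact le_iInf fun j => le_iInf fun hj => hPle N j ⟨j.isLt, hj⟩
    · refine hlePt N _ fun j hj => iInf_le_of_le j (iInf_le _ hj.2)
  rw [← hPN]; exact main N

/-- Inside a subspace `q`, choose a complement of `q ⊓ p` which is disjoint from `p`. -/
private lemma exists_compl_inside (p q : Submodule k V) :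
    ∃ C : Submodule k V, C ≤ q ∧ C ⊓ p = ⊥ ∧ C ⊔ q ⊓ p = q := by
  obtain ⟨q', hq'⟩ := Submodule.exists_isCompl (comap q.subtype p)
  refine ⟨map q.subtype q', map_subtype_le q q', ?_, ?_⟩
  · rw [eq_bot_iff]
    rintro x ⟨hx1, hx2⟩
    obtain ⟨y, hy, rfl⟩ := hx1
    have hy2 : y ∈ comap q.subtype p ⊓ q' := ⟨hx2, hy⟩
    rw [hq'.inf_eq_bot] at hy2
    rw [(Submodule.mem_bot _).mp hy2]
    simp
  · rw [← map_comap_subtype, ← Submodule.map_sup, sup_comm, hq'.sup_eq_top,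
      Submodule.map_top, range_subtype]

end Aux
theorem transverse_iff_basis {k V : Type*} [Field k] [AddCommGroup V]
    [Module k V] (N : ℕ) (Ws : Fin N → Submodule k V) :
    (∀ m : Fin N, 0 < m.val →
        (⨅ (j : Fin N) (_ : j < m), Ws j) ⊔ Ws m = ⊤) ↔
      ∃ (E : Set V) (Es : Fin N → Set V),
        LinearIndependent k ((↑) : E → V) ∧
        Submodule.span k E = ⊤ ∧
        (∀ j, Es j ⊆ E) ∧
        Pairwise (Function.onFun Disjoint Es) ∧
        ∀ j, Ws j = Submodule.span k (E \ Es j) := by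
  classical
  constructor
  · intro h
    -- derive the hypothesis for all `m` (it is trivial for `m = 0`)
    have h' : ∀ m : Fin N, Ilt Ws m.val ⊔ Ws m = ⊤ := by
      intro m
      rcases Nat.eq_zero_or_pos m.val with h0 | h0
      · have : Ilt Ws m.val = ⊤ := by rw [h0]; exact Ilt_zero Ws
        rw [this, top_sup_eq]
      · exact h m h0
    set J : Fin N → Submodule k V := fun m => ⨅ (j : Fin N) (_ : j ≠ m), Ws j with hJ
    have hkey : ∀ m, J m ⊔ Ws m = ⊤ := key_lemma Ws h'
    have hJle : ∀ m j, j ≠ m → J m ≤ Ws j := fun m j hj => iInf_le_of_le j (iInf_le _ hj)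
    have hJIlt : ∀ m : Fin N, J m ≤ Ilt Ws m.val := by
      refine fun m => le_iInf fun j => le_iInf fun hj => ?_
      exact hJle m j (fun e => absurd (e ▸ hj) (lt_irrefl _))
    have hIltm : ∀ m : Fin N, Ilt Ws (m.val + 1) = Ilt Ws m.val ⊓ Ws m := by
      intro m
      have := Ilt_succ Ws m.isLt
      rwa [Fin.eta] at this
    -- choose the complements
    have hex : ∀ m : Fin N, ∃ C : Submodule k V, C ≤ J m ∧
        C ⊓ Ilt Ws (m.val + 1) = ⊥ ∧ C ⊔ Ilt Ws (m.val + 1) = Ilt Ws m.val := by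
      intro m
      obtain ⟨C, hC1, hC2, hC3⟩ := exists_compl_inside (Ilt Ws (m.val + 1)) (J m)
      refine ⟨C, hC1, hC2, le_antisymm ?_ ?_⟩
      · exact sup_le (hC1.trans (hJIlt m)) (Ilt_anti Ws (Nat.le_succ _))
      · have hJsup : J m ⊔ Ilt Ws (m.val + 1) = Ilt Ws m.val := by
          rw [hIltm m, sup_comm, inf_sup_assoc_of_le _ (hJIlt m), sup_comm (Ws m) (J m),
            hkey m, inf_top_eq]
        rw [← hJsup]
        refine sup_le ?_ le_sup_right
        rw [← hC3]
        exact sup_le le_sup_left (inf_le_right.trans le_sup_right)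
    choose C hCle hCdisj hCsup using hex
    set R : Submodule k V := ⨅ j, Ws j with hR
    have hRW : ∀ j, R ≤ Ws j := fun j => iInf_le _ j
    have hCW : ∀ m j, j ≠ m → C m ≤ Ws j := fun m j hj => (hCle m).trans (hJle m j hj)
    have hCIlt : ∀ m, C m ≤ Ilt Ws m.val := fun m => (hCle m).trans (hJIlt m)
    have hCWm : ∀ m, C m ⊓ Ws m = ⊥ := by
      intro m
      rw [eq_bot_iff, ← hCdisj m]
      exact le_inf inf_le_left (by rw [hIltm m]; exact inf_le_inf_right _ (hCIlt m))
    set Csup : ℕ → Submodule k V := fun t => ⨆ (j : Fin N) (_ : (j : ℕ) < t), C j with hCs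
    have hCsle : ∀ t (j : Fin N), (j : ℕ) < t → C j ≤ Csup t := fun t j hj =>
      le_iSup_of_le j (le_iSup (fun _ : (j : ℕ) < t => C j) hj)
    have hCsle' : ∀ t (q : Submodule k V), (∀ j : Fin N, (j : ℕ) < t → C j ≤ q) → Csup t ≤ q :=
      fun t q hq => iSup_le fun j => iSup_le fun hj => hq j hj
    have hCsup_succ : ∀ {s : ℕ} (hsN : s < N), Csup (s + 1) = Csup s ⊔ C ⟨s, hsN⟩ := by
      intro s hsN
      apply le_antisymm
      · refine hCsle' (s + 1) _ fun j hj => ?_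
        rcases Nat.lt_succ_iff_lt_or_eq.mp hj with hj' | hj'
        · exact (hCsle s j hj').trans le_sup_left
        · have : j = ⟨s, hsN⟩ := Fin.ext hj'
          rw [this]; exact le_sup_right
      · exact sup_le (hCsle' s _ fun j hj => hCsle (s + 1) j (Nat.lt_succ_of_lt hj))
          (hCsle (s + 1) _ (Nat.lt_succ_self s))
    have hCsup_stab : ∀ {s : ℕ}, N ≤ s → Csup (s + 1) = Csup s := by
      intro s hs
      apply le_antisymm
      · exact hCsle' (s + 1) _ fun j _ => hCsle s j (lt_of_lt_of_le j.isLt hs)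
      · exact hCsle' s _ fun j _ => hCsle (s + 1) j (lt_of_lt_of_le j.isLt (Nat.le_succ_of_le hs))
    -- the C's together with the residual intersection are independent
    have hSdisj : ∀ t, Csup t ⊓ Ilt Ws t = ⊥ := by
      intro t
      induction t with
      | zero =>
        have : Csup 0 = ⊥ := by simp [hCs]
        rw [this, bot_inf_eq]
      | succ s ih =>
        by_cases hsN : s < N
        · set ws : Fin N := ⟨s, hsN⟩ with hws
          have h2 : (Csup s ⊔ C ws) ⊓ Ilt Ws s = C ws := by
            rw [sup_comm, sup_inf_assoc_of_le _ (hCIlt ws), ih, sup_bot_eq]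
          have h3 : Ilt Ws (s + 1) = Ilt Ws s ⊓ Ilt Ws (s + 1) :=
            (inf_eq_right.mpr (Ilt_anti Ws (Nat.le_succ s))).symm
          rw [hCsup_succ hsN, h3, ← inf_assoc, h2]
          exact hCdisj ws
        · rw [hCsup_stab (le_of_not_gt hsN),
            Ilt_of_ge Ws (Nat.le_succ_of_le (le_of_not_gt hsN)), ← Ilt_of_ge Ws (le_of_not_gt hsN)]
          exact ih
    -- the sups reconstruct everything
    have hStopAux : ∀ t, Ilt Ws t ⊔ Csup t = ⊤ := by
      intro t
      induction t with
      | zero => rw [Ilt_zero Ws, top_sup_eq]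
      | succ s ih =>
        by_cases hsN : s < N
        · have hws := hCsup ⟨s, hsN⟩
          have hstep : Ilt Ws s ≤ C ⟨s, hsN⟩ ⊔ Ilt Ws (s + 1) := by
            rw [show ((⟨s, hsN⟩ : Fin N) : ℕ) = s from rfl] at hws
            exact hws.ge
          rw [eq_top_iff]
          calc (⊤ : Submodule k V) = Ilt Ws s ⊔ Csup s := ih.symm
            _ ≤ (C ⟨s, hsN⟩ ⊔ Ilt Ws (s + 1)) ⊔ Csup s := sup_le_sup_right hstep _
            _ ≤ Ilt Ws (s + 1) ⊔ Csup (s + 1) := by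
                rw [hCsup_succ hsN]
                exact sup_le (sup_le (le_sup_of_le_right le_sup_right) le_sup_left)
                  (le_sup_of_le_right le_sup_left)
        · rw [hCsup_stab (le_of_not_gt hsN),
            Ilt_of_ge Ws (Nat.le_succ_of_le (le_of_not_gt hsN)), ← Ilt_of_ge Ws (le_of_not_gt hsN)]
          exact ih
    have hStop : R ⊔ Csup N = ⊤ := by
      rw [hR, ← Ilt_of_ge Ws (le_refl N)]
      exact hStopAux N
    -- each W equals the sup of R and the other C's
    have hWeq : ∀ m, Ws m = R ⊔ ⨆ (j : Fin N) (_ : j ≠ m), C j := by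
      intro m
      set S : Submodule k V := R ⊔ ⨆ (j : Fin N) (_ : j ≠ m), C j with hS
      have hSW : S ≤ Ws m := by
        refine sup_le (hRW m) (iSup_le fun j => iSup_le fun hj => hCW j m hj.symm)
      have hStop' : S ⊔ C m = ⊤ := by
        rw [eq_top_iff, ← hStop]
        refine sup_le (le_sup_of_le_left le_sup_left) ?_
        refine hCsle' N _ fun j _ => ?_
        by_cases hj : j = m
        · rw [hj]; exact le_sup_right
        · exact le_sup_of_le_left (le_sup_of_le_right
            (le_iSup_of_le j (le_iSup (fun _ : j ≠ m => C j) hj)))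
      calc Ws m = (S ⊔ C m) ⊓ Ws m := by rw [hStop', top_inf_eq]
        _ = S ⊔ C m ⊓ Ws m := sup_inf_assoc_of_le _ hSW
        _ = S := by rw [hCWm m, sup_bot_eq]
    -- package into an Option-indexed internal direct sum
    set f : Option (Fin N) → Submodule k V := fun o => Option.elim o R C with hf
    have hfW : ∀ (i : Option (Fin N)) (j : Fin N), i ≠ some j → f i ≤ Ws j := by
      rintro (_ | i) j hij
      · exact hRW j
      · exact hCW i j fun e => hij (by rw [e])
    have hindep : iSupIndep f := by
      rintro (_ | m)
      · -- R disjoint from all C's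
        have hle : (⨆ (i : Option (Fin N)) (_ : i ≠ none), f i) ≤ Csup N := by
          refine iSup_le fun i => iSup_le fun hi => ?_
          match i with
          | none => exact absurd rfl hi
          | some j => exact hCsle N j j.isLt
        rw [disjoint_iff, eq_bot_iff, ← hSdisj N]
        exact le_inf (inf_le_right.trans hle)
          (inf_le_left.trans (Ilt_of_ge Ws (le_refl N)).symm.le)
      · have hle : (⨆ (i : Option (Fin N)) (_ : i ≠ some m), f i) ≤ Ws m :=
          iSup_le fun i => iSup_le fun hi => hfW i m hi
        rw [disjoint_iff, eq_bot_iff, ← hCWm m]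
        exact le_inf inf_le_left (inf_le_right.trans hle)
    have hsupf : (⨆ i, f i) = ⊤ := by
      rw [eq_top_iff, ← hStop]
      refine sup_le (le_iSup f none) (hCsle' N _ fun j _ => le_iSup f (some j))
    have hInternal : DirectSum.IsInternal f :=
      DirectSum.isInternal_submodule_of_iSupIndep_of_iSup_eq_top hindep hsupf
    set v : ∀ i : Option (Fin N), Module.Basis (Module.Basis.ofVectorSpaceIndex k (f i)) k (f i) :=
      fun i => Module.Basis.ofVectorSpace k (f i) with hv
    set b := hInternal.collectedBasis v with hb
    have hbcoe : ∀ a : Σ i, Module.Basis.ofVectorSpaceIndex k (f i), b a = (v a.1 a.2 : V) := by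
      intro a; rw [hb, hInternal.collectedBasis_coe v]
    have hbinj : Function.Injective b := b.injective
    refine ⟨Set.range b, fun j => Set.range fun a => b ⟨some j, a⟩, ?_, ?_, ?_, ?_, ?_⟩
    · exact (linearIndepOn_id_range_iff b.injective).mpr b.linearIndependent
    · exact b.span_eq
    · rintro j x ⟨a, rfl⟩
      exact ⟨⟨some j, a⟩, rfl⟩
    · intro i j hij
      rw [Function.onFun, Set.disjoint_left]
      rintro x ⟨a, rfl⟩ ⟨a', he⟩
      have h2 : (⟨some j, a'⟩ : Σ o, Module.Basis.ofVectorSpaceIndex k (f o)) = ⟨some i, a⟩ := hbinj he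
      have h3 : some j = some i := congrArg Sigma.fst h2
      exact hij (Option.some_injective _ h3).symm
    · intro j
      have hfspan : ∀ i : Option (Fin N), i ≠ some j →
          f i ≤ Submodule.span k (Set.range b \ Set.range fun a => b ⟨some j, a⟩) := by
        intro i hi
        have h1 : f i = Submodule.span k (Set.range fun a => b ⟨i, a⟩) := by
          calc f i = map (f i).subtype ⊤ := by rw [Submodule.map_top, range_subtype]
            _ = map (f i).subtype (Submodule.span k (Set.range (v i))) := by rw [(v i).span_eq]
            _ = Submodule.span k ((f i).subtype '' Set.range (v i)) := Submodule.map_span _ _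
            _ = Submodule.span k (Set.range fun a => b ⟨i, a⟩) := by
                have hfun : ((f i).subtype ∘ (v i) : _ → V) = fun a => b ⟨i, a⟩ := by
                  funext a
                  rw [hbcoe ⟨i, a⟩]
                  rfl
                rw [← Set.range_comp, hfun]
        rw [h1]
        apply Submodule.span_mono
        rintro x ⟨a, rfl⟩
        refine ⟨⟨⟨i, a⟩, rfl⟩, ?_⟩
        rintro ⟨a', he⟩
        have := congrArg Sigma.fst (hbinj he)
        simp only at this
        exact hi this.symm
      apply le_antisymm
      · rw [hWeq j]
        refine sup_le (hfspan none (by simp)) ?_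
        refine iSup_le fun i => iSup_le fun hi => ?_
        exact hfspan (some i) (by simpa using hi)
      · rw [Submodule.span_le]
        rintro x ⟨⟨⟨i, a⟩, rfl⟩, hne⟩
        have hij : i ≠ some j := by
          intro e
          subst e
          exact hne ⟨a, rfl⟩
        exact hfW i j hij (hInternal.collectedBasis_mem v ⟨i, a⟩)
  · rintro ⟨E, Es, hli, hspan, hsub, hdisj, hW⟩ m hm
    rw [eq_top_iff, ← hspan, Submodule.span_le]
    intro x hx
    by_cases hxm : x ∈ Es m
    · apply Submodule.mem_sup_left
      refine (Submodule.mem_iInf fun j => ⨅ _ : j < m, Ws j).mpr fun j => ?_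
      refine (Submodule.mem_iInf fun _ : j < m => Ws j).mpr fun hj => ?_
      rw [hW j]
      apply Submodule.subset_span
      exact ⟨hx, fun hxj => Set.disjoint_left.mp (hdisj (ne_of_lt hj)) hxj hxm⟩
    · apply Submodule.mem_sup_right
      rw [hW m]
      exact Submodule.subset_span ⟨hx, hxm⟩
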